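/- Let X be a topological space, z ∈ X, and {U_i : i ∈ I} pairwise disjoint open subsets of X with z in the closure of ⋃_i {x ∈ X : g_i(x) ≥ 1}, where each g_i : X → [0,2] is continuous with support contained in U_i and z ∉ U_i for all i. Then the family {2g_i : i ∈ I} is not equicontinuous at z. -/
import Mathlib

/-- If `g i : X → [0,2]` are continuous with supports in pairwise disjoint open sets `U i`
avoiding `z`, and `z` lies in the closure of `⋃ i, {x | g i x ≥ 1}`, then the family
`{2 g i}` is not equicontinuous at `z`. -/
theorem stmt_19 {X : Type*} [TopologicalSpace X]
    {I : Type*} (z : X) (U : I → Set X) (hopen : ∀ i, IsOpen (U i))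
    (hdisj : ∀ i j, i ≠ j → Disjoint (U i) (U j))
    (g : I → X → ℝ) (hc : ∀ i, Continuous (g i))
    (hrange : ∀ i x, g i x ∈ Set.Icc (0 : ℝ) 2)
    (hsupp : ∀ i, tsupport (g i) ⊆ U i)
    (hzU : ∀ i, z ∉ U i)
    (hcl : z ∈ closure (⋃ i, {x | 1 ≤ g i x})) :
    ¬ EquicontinuousAt (fun i => fun x => 2 * g i x) z := by
  intro h
  rw [Metric.equicontinuousAt_iff_right] at h
  have hz0 : ∀ i, g i z = 0 := fun i =>
    image_eq_zero_of_notMem_tsupport (fun hz => hzU i (hsupp i hz))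
  obtain ⟨V, hV, hVsub⟩ := (h 1 one_pos).exists_mem
  obtain ⟨x, hxV, hxU⟩ := mem_closure_iff_nhds.mp hcl V hV
  obtain ⟨_, ⟨i, rfl⟩, hxi⟩ := hxU
  have h1 := hVsub x hxV i
  rw [hz0 i] at h1
  simp only [mul_zero, Real.dist_eq, zero_sub, abs_neg] at h1
  have : (1:ℝ) ≤ g i x := hxi
  have : |2 * g i x| ≥ 2 := by rw [abs_of_nonneg (by linarith)]; linarith
  linarith
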